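/- arXiv:1310.7095 — 4 statements merged into one kernel-verified Lean document; each statement's English description precedes it below -/
import Mathlib

section
/- Assume the leading coefficients c_{j, m_j − 1} are nonzero for every j = 1, …, n. Then for every k_0 ∈ ℕ and every N ≥ M, the N × N square Hankel matrix H_{N,N}^{k_0} with entries h(k_0 + i + l) (0 ≤ i, l ≤ N − 1) has rank exactly M. -/
open Finset Polynomial

lemma degree_C_mul_le' {a : ℂ} (p : Polynomial ℂ) : (C a * p).degree ≤ p.degree := by
  calc (C a * p).degree ≤ (C a).degree + p.degree := Polynomial.degree_mul_le _ _
    _ ≤ 0 + p.degree := add_le_add Polynomial.degree_C_le le_rfl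
    _ = p.degree := zero_add _

lemma core_vanish : ∀ (M : ℕ) (n : ℕ) (z : Fin n → ℂ), Function.Injective z →
    (∀ j, z j ≠ 0) → ∀ (m : Fin n → ℕ), (∑ j, m j) = M →
    ∀ (P : Fin n → Polynomial ℂ), (∀ j, (P j).degree < (m j : ℕ)) →
    ∀ (k0 : ℕ), (∀ k < M, ∑ j, (P j).eval ((k0 + k : ℕ) : ℂ) * z j ^ (k0 + k) = 0) →
    ∀ j, P j = 0 := by
  intro M
  induction M with
  | zero =>
    intro n z hz hz0 m hsum P hdeg k0 hzero j
    have hmj : m j = 0 := Finset.sum_eq_zero_iff.mp hsum j (Finset.mem_univ j)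
    have h := hdeg j
    rw [hmj] at h
    rw [← Polynomial.degree_eq_bot]
    exact Nat.WithBot.lt_zero_iff.mp (by simpa using h)
  | succ M ih =>
    intro n z hz hz0 m hsum P hdeg k0 hzero
    have hex : ∃ j0, 0 < m j0 := by
      by_contra h
      push_neg at h
      have : (∑ j, m j) = 0 := Finset.sum_eq_zero (fun j _ => Nat.le_zero.mp (h j))
      omega
    obtain ⟨j0, hj0⟩ := hex
    set Q : Fin n → Polynomial ℂ :=
      fun j => C (z j) * (P j).comp (X + C 1) - C (z j0) * (P j) with hQ
    set m' : Fin n → ℕ := fun j => if j = j0 then m j - 1 else m j with hm'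
    have hsum' : (∑ j, m' j) = M := by
      have h1 : (∑ j, m' j) + 1 = ∑ j, m j := by
        rw [← Finset.sum_erase_add _ _ (Finset.mem_univ j0),
            ← Finset.sum_erase_add _ m (Finset.mem_univ j0)]
        have he : ∑ j ∈ Finset.univ.erase j0, m' j = ∑ j ∈ Finset.univ.erase j0, m j :=
          Finset.sum_congr rfl fun j hj => by
            simp only [hm', if_neg (Finset.ne_of_mem_erase hj)]
        rw [he]
        simp only [hm', if_pos rfl]
        omega
      omega
    have hcomp_deg : ∀ j, ((P j).comp (X + C 1)).degree = (P j).degree := by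
      intro j
      by_cases hp : P j = 0
      · rw [hp, Polynomial.zero_comp]
      · have hnd : ((P j).comp (X + C 1)).natDegree = (P j).natDegree := by
          rw [Polynomial.natDegree_comp, Polynomial.natDegree_X_add_C, mul_one]
        have hlc : ((P j).comp (X + C 1)).leadingCoeff = (P j).leadingCoeff := by
          rw [Polynomial.leadingCoeff_comp (by rw [Polynomial.natDegree_X_add_C]; omega),
            (Polynomial.monic_X_add_C (1:ℂ)).leadingCoeff, one_pow, mul_one]
        have hne : (P j).comp (X + C 1) ≠ 0 := fun h => hp (by
          rw [← Polynomial.leadingCoeff_eq_zero, ← hlc, h, Polynomial.leadingCoeff_zero])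
        rw [Polynomial.degree_eq_natDegree hne, Polynomial.degree_eq_natDegree hp, hnd]
    have hcomp_lc : ∀ j, P j ≠ 0 →
        ((P j).comp (X + C 1)).leadingCoeff = (P j).leadingCoeff := by
      intro j _
      rw [Polynomial.leadingCoeff_comp (by rw [Polynomial.natDegree_X_add_C]; omega),
        (Polynomial.monic_X_add_C (1:ℂ)).leadingCoeff, one_pow, mul_one]
    have hdeg' : ∀ j, (Q j).degree < (m' j : ℕ) := by
      intro j
      by_cases hj : j = j0
      · subst hj
        have hQj : Q j = C (z j) * ((P j).comp (X + C 1) - P j) := by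
          simp only [hQ]; ring
        simp only [hm', if_pos rfl]
        by_cases hp : P j = 0
        · rw [hQj, hp]
          simp only [Polynomial.zero_comp, sub_zero, mul_zero, Polynomial.degree_zero]
          exact WithBot.bot_lt_coe _
        · have hcne : (P j).comp (X + C 1) ≠ 0 := fun h => hp (by
            rw [← Polynomial.leadingCoeff_eq_zero, ← hcomp_lc j hp, h,
              Polynomial.leadingCoeff_zero])
          have hlt : ((P j).comp (X + C 1) - P j).degree < (P j).degree := by
            have := Polynomial.degree_sub_lt (hcomp_deg j) hcne (hcomp_lc j hp)
            rwa [hcomp_deg j] at this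
          have hnd : (P j).natDegree ≤ m j - 1 := by
            have := (Polynomial.natDegree_lt_iff_degree_lt hp).mpr (hdeg j)
            omega
          calc (Q j).degree ≤ ((P j).comp (X + C 1) - P j).degree := by
                rw [hQj]; exact degree_C_mul_le' _
            _ < (P j).degree := hlt
            _ = ((P j).natDegree : WithBot ℕ) := Polynomial.degree_eq_natDegree hp
            _ ≤ ((m j - 1 : ℕ) : WithBot ℕ) := by exact_mod_cast hnd
      · simp only [hm', if_neg hj]
        apply lt_of_le_of_lt (Polynomial.degree_sub_le _ _)
        rw [max_lt_iff]
        constructor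
        · exact lt_of_le_of_lt (le_trans (degree_C_mul_le' _) (le_of_eq (hcomp_deg j))) (hdeg j)
        · exact lt_of_le_of_lt (degree_C_mul_le' _) (hdeg j)
    have hzero' : ∀ k < M, ∑ j, (Q j).eval ((k0 + k : ℕ) : ℂ) * z j ^ (k0 + k) = 0 := by
      intro k hk
      have e1 : ∑ j, (Q j).eval ((k0 + k : ℕ) : ℂ) * z j ^ (k0 + k)
          = (∑ j, (P j).eval ((k0 + (k+1) : ℕ) : ℂ) * z j ^ (k0 + (k+1)))
            - z j0 * ∑ j, (P j).eval ((k0 + k : ℕ) : ℂ) * z j ^ (k0 + k) := by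
        rw [Finset.mul_sum, ← Finset.sum_sub_distrib]
        apply Finset.sum_congr rfl
        intro j _
        simp only [hQ, Polynomial.eval_sub, Polynomial.eval_mul, Polynomial.eval_C,
          Polynomial.eval_comp, Polynomial.eval_add, Polynomial.eval_X, Polynomial.eval_one]
        have : (((k0 + (k+1) : ℕ)) : ℂ) = ((k0 + k : ℕ) : ℂ) + 1 := by push_cast; ring
        rw [this]
        have hzp : z j ^ (k0 + (k + 1)) = z j ^ (k0 + k) * z j := by
          rw [← pow_succ]; ring_nf
        rw [hzp]
        ring
      rw [e1, hzero k (by omega), hzero (k+1) (by omega)]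
      ring
    have hQ0 : ∀ j, Q j = 0 := ih n z hz hz0 m' hsum' Q hdeg' k0 hzero'
    -- j ≠ j0 : P j = 0
    have hPj : ∀ j, j ≠ j0 → P j = 0 := by
      intro j hj
      by_contra hp
      have h1 : C (z j) * (P j).comp (X + C 1) = C (z j0) * (P j) := by
        have := hQ0 j
        simp only [hQ] at this
        linear_combination this
      have h2 := congrArg Polynomial.leadingCoeff h1
      rw [Polynomial.leadingCoeff_mul, Polynomial.leadingCoeff_mul,
        Polynomial.leadingCoeff_C, Polynomial.leadingCoeff_C, hcomp_lc j hp] at h2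
      have hlc : (P j).leadingCoeff ≠ 0 := Polynomial.leadingCoeff_ne_zero.mpr hp
      have : z j = z j0 := by
        exact mul_right_cancel₀ hlc h2
      exact hj (hz this)
    -- j0 : P j0 is constant
    have hcomp_eq : (P j0).comp (X + C 1) = P j0 := by
      have h1 : C (z j0) * ((P j0).comp (X + C 1) - P j0) = 0 := by
        have := hQ0 j0
        simp only [hQ] at this
        linear_combination this
      have h2 : (P j0).comp (X + C 1) - P j0 = 0 := by
        rcases mul_eq_zero.mp h1 with h | h
        · exact absurd (Polynomial.C_eq_zero.mp h) (hz0 j0)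
        · exact h
      exact sub_eq_zero.mp h2
    have hconst : P j0 = C ((P j0).eval 0) := by
      have heval : ∀ k : ℕ, (P j0).eval (k : ℂ) = (P j0).eval 0 := by
        intro k
        induction k with
        | zero => norm_num
        | succ k ihk =>
          have h := congrArg (Polynomial.eval ((k : ℕ) : ℂ)) hcomp_eq
          rw [Polynomial.eval_comp] at h
          simp only [Polynomial.eval_add, Polynomial.eval_X, Polynomial.eval_C] at h
          have hc : ((k+1 : ℕ) : ℂ) = (k : ℂ) + 1 := by push_cast; ring
          rw [hc, h, ihk]
      apply Polynomial.eq_of_infinite_eval_eq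
      apply Set.Infinite.mono (s := Set.range ((↑) : ℕ → ℂ))
      · rintro x ⟨k, rfl⟩
        simp only [Set.mem_setOf_eq, Polynomial.eval_C]
        exact heval k
      · exact Set.infinite_range_of_injective Nat.cast_injective
    have hP0 : P j0 = 0 := by
      have h := hzero 0 (by omega)
      have he : ∑ j, (P j).eval ((k0 + 0 : ℕ) : ℂ) * z j ^ (k0 + 0)
          = (P j0).eval 0 * z j0 ^ k0 := by
        rw [Finset.sum_eq_single j0]
        · rw [hconst]; simp
        · intro j _ hj
          rw [hPj j hj]; simp
        · intro h; exact absurd (Finset.mem_univ j0) h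
      rw [he] at h
      have : (P j0).eval 0 = 0 := by
        rcases mul_eq_zero.mp h with h' | h'
        · exact h'
        · exact absurd h' (pow_ne_zero _ (hz0 j0))
      rw [hconst, this, map_zero]
    intro j
    by_cases hj : j = j0
    · rw [hj]; exact hP0
    · exact hPj j hj

section Aux
variable {mm : ℕ}

/-- polynomial with prescribed coefficients -/
noncomputable def papoly (a : Fin mm → ℂ) : Polynomial ℂ :=
  ∑ t : Fin mm, C (a t) * X ^ (t : ℕ)

/-- the shifted polynomial: q_t(Y) = ∑_s c_s * choose(s,t) * Y^(s-t) -/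
noncomputable def qpoly (c : Fin mm → ℂ) (t : ℕ) : Polynomial ℂ :=
  ∑ s : Fin mm, C (c s * ((s : ℕ).choose t : ℂ)) * X ^ ((s : ℕ) - t)

lemma papoly_degree (hm : 1 ≤ mm) (a : Fin mm → ℂ) : (papoly a).degree < (mm : ℕ) := by
  unfold papoly
  apply lt_of_le_of_lt (Polynomial.degree_sum_le _ _)
  rw [Finset.sup_lt_iff (by exact WithBot.bot_lt_coe _)]
  intro t _
  exact lt_of_le_of_lt (Polynomial.degree_C_mul_X_pow_le _ _) (by exact_mod_cast t.2)

lemma papoly_coeff (a : Fin mm → ℂ) (t : Fin mm) : (papoly a).coeff (t : ℕ) = a t := by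
  unfold papoly
  rw [Polynomial.finset_sum_coeff]
  rw [Finset.sum_eq_single t]
  · simp [Polynomial.coeff_C_mul, Polynomial.coeff_X_pow]
  · intro t' _ ht'
    simp only [Polynomial.coeff_C_mul, Polynomial.coeff_X_pow]
    rw [if_neg, mul_zero]
    exact fun h => ht' (Fin.ext (by omega))
  · intro h; exact absurd (Finset.mem_univ t) h

lemma papoly_eval (a : Fin mm → ℂ) (y : ℂ) :
    (papoly a).eval y = ∑ t : Fin mm, a t * y ^ (t : ℕ) := by
  unfold papoly
  rw [Polynomial.eval_finset_sum]
  simp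

lemma qpoly_degree (hm : 1 ≤ mm) (c : Fin mm → ℂ) (t : ℕ) : (qpoly c t).degree < (mm : ℕ) := by
  unfold qpoly
  apply lt_of_le_of_lt (Polynomial.degree_sum_le _ _)
  rw [Finset.sup_lt_iff (by exact WithBot.bot_lt_coe _)]
  intro s _
  apply lt_of_le_of_lt (Polynomial.degree_C_mul_X_pow_le _ _)
  exact_mod_cast show (s : ℕ) - t < mm by omega

lemma qpoly_eval (c : Fin mm → ℂ) (t : ℕ) (y : ℂ) :
    (qpoly c t).eval y = ∑ s : Fin mm, c s * ((s : ℕ).choose t : ℂ) * y ^ ((s : ℕ) - t) := by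
  unfold qpoly
  rw [Polynomial.eval_finset_sum]
  simp

lemma qpoly_coeff_zero (c : Fin mm → ℂ) {t d : ℕ} (h : mm - 1 < t + d) :
    (qpoly c t).coeff d = 0 := by
  unfold qpoly
  rw [Polynomial.finset_sum_coeff]
  apply Finset.sum_eq_zero
  intro s _
  simp only [Polynomial.coeff_C_mul, Polynomial.coeff_X_pow]
  by_cases hts : t ≤ (s : ℕ)
  · rw [if_neg, mul_zero]
    have := s.2
    omega
  · rw [Nat.choose_eq_zero_of_lt (by omega)]
    simp

lemma qpoly_coeff_diag (hm : 1 ≤ mm) (c : Fin mm → ℂ) {t d : ℕ} (h : t + d = mm - 1) :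
    (qpoly c t).coeff d = c ⟨mm - 1, by omega⟩ * ((mm - 1).choose t : ℂ) := by
  unfold qpoly
  rw [Polynomial.finset_sum_coeff]
  rw [Finset.sum_eq_single (⟨mm - 1, by omega⟩ : Fin mm)]
  · simp only [Polynomial.coeff_C_mul, Polynomial.coeff_X_pow]
    rw [if_pos (by omega), mul_one]
  · intro s _ hs
    have hsne : (s : ℕ) ≠ mm - 1 := fun hh => hs (Fin.ext (by simpa using hh))
    simp only [Polynomial.coeff_C_mul, Polynomial.coeff_X_pow]
    by_cases hts : t ≤ (s : ℕ)
    · rw [if_neg (by omega), mul_zero]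
    · rw [Nat.choose_eq_zero_of_lt (by omega)]
      simp
  · intro h; exact absurd (Finset.mem_univ _) h

/-- triangularity: the (q t) are linearly independent when the top coefficient is nonzero -/
lemma qpoly_triangular (hm : 1 ≤ mm) (c : Fin mm → ℂ)
    (hc : c ⟨mm - 1, by omega⟩ ≠ 0) (b : Fin mm → ℂ)
    (hb : (∑ t : Fin mm, C (b t) * qpoly c (t : ℕ)) = 0) : ∀ t, b t = 0 := by
  suffices h : ∀ t : ℕ, ∀ ht : t < mm, b ⟨t, ht⟩ = 0 by
    intro t; have := h t t.2; simpa using this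
  intro t
  induction t using Nat.strong_induction_on with
  | _ t ih =>
    intro ht
    have hco := congrArg (fun p => Polynomial.coeff p (mm - 1 - t)) hb
    simp only [Polynomial.finset_sum_coeff, Polynomial.coeff_C_mul,
      Polynomial.coeff_zero] at hco
    rw [Finset.sum_eq_single (⟨t, ht⟩ : Fin mm)] at hco
    · rw [qpoly_coeff_diag hm c (by simp only [Fin.val_mk]; omega)] at hco
      have hch : ((mm - 1).choose t : ℂ) ≠ 0 :=
        Nat.cast_ne_zero.mpr (Nat.choose_pos (by omega : t ≤ mm - 1)).ne'
      rcases mul_eq_zero.mp hco with h | h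
      · exact h
      · exact absurd h (mul_ne_zero hc hch)
    · intro t' _ ht'
      by_cases hlt : (t' : ℕ) < t
      · rw [ih t' hlt t'.2]
        · simp
      · have : t < (t' : ℕ) := by
          rcases Nat.lt_or_ge t t' with h | h
          · exact h
          · exfalso; exact ht' (Fin.ext (by simp only [Fin.val_mk]; omega))
        rw [qpoly_coeff_zero c (by omega), mul_zero]
    · intro h; exact absurd (Finset.mem_univ _) h

/-- binomial expansion with a padded index range -/
lemma add_pow_fin {s : ℕ} (hs : s < mm) (x y : ℂ) :
    (x + y) ^ s = ∑ t : Fin mm, ((s.choose (t : ℕ) : ℂ)) * x ^ (t : ℕ) * y ^ (s - (t : ℕ)) := by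
  rw [Fin.sum_univ_eq_sum_range (fun t => ((s.choose t : ℂ)) * x ^ t * y ^ (s - t)) mm]
  rw [add_pow]
  rw [← Finset.sum_subset (Finset.range_subset_range.mpr (by omega : s + 1 ≤ mm))]
  · apply Finset.sum_congr rfl
    intro t _
    ring
  · intro t _ ht
    rw [Nat.choose_eq_zero_of_lt (by simp at ht ⊢; omega)]
    simp

section Main
open Matrix

/-- The monomial-exponential sum `h(k) = ∑ j ∑ s, c j s * k ^ s * z j ^ k`. -/
noncomputable def hmes {n : ℕ} (z : Fin n → ℂ) (m : Fin n → ℕ)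
    (c : (j : Fin n) → Fin (m j) → ℂ) (k : ℕ) : ℂ :=
  ∑ j, ∑ s : Fin (m j), c j s * (k : ℂ) ^ (s : ℕ) * z j ^ k

/-- The `N × M'` Hankel matrix with entries `h (k0 + i + l)`. -/
def hankel (h : ℕ → ℂ) (k0 N M' : ℕ) : Matrix (Fin N) (Fin M') ℂ :=
  Matrix.of fun i l => h (k0 + (i : ℕ) + (l : ℕ))

/-- if all leading coefficients `c j (m j - 1)` are nonzero, then
for every `k0` and every `N ≥ M` the square `N × N` Hankel matrix has rank
exactly `M`. -/
theorem hankel_square_rank (n : ℕ) (hn : 1 ≤ n) (z : Fin n → ℂ)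
    (hz : Function.Injective z) (hz0 : ∀ j, z j ≠ 0)
    (m : Fin n → ℕ) (hm : ∀ j, 1 ≤ m j) (M : ℕ) (hM : M = ∑ j, m j)
    (c : (j : Fin n) → Fin (m j) → ℂ)
    (hc : ∀ j, c j ⟨m j - 1, Nat.sub_lt (hm j) one_pos⟩ ≠ 0)
    (k0 N : ℕ) (hN : M ≤ N) :
    (hankel (hmes z m c) k0 N N).rank = M := by
  classical
  set A : Matrix (Fin N) ((j : Fin n) × Fin (m j)) ℂ :=
    Matrix.of fun i σ => (i : ℂ) ^ (σ.2 : ℕ) * z σ.1 ^ (i : ℕ) with hA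
  set B : Matrix ((j : Fin n) × Fin (m j)) (Fin N) ℂ :=
    Matrix.of fun σ l =>
      z σ.1 ^ (k0 + (l : ℕ)) * (qpoly (c σ.1) (σ.2 : ℕ)).eval ((k0 + (l : ℕ) : ℕ) : ℂ)
    with hB
  -- factorization
  have hfact : hankel (hmes z m c) k0 N N = A * B := by
    ext i l
    rw [Matrix.mul_apply]
    show hmes z m c (k0 + (i : ℕ) + (l : ℕ)) = _
    unfold hmes
    rw [← Finset.univ_sigma_univ, Finset.sum_sigma]
    apply Finset.sum_congr rfl
    intro j _
    have hcast : ((k0 + (i : ℕ) + (l : ℕ) : ℕ) : ℂ)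
        = (i : ℂ) + ((k0 + (l : ℕ) : ℕ) : ℂ) := by push_cast; ring
    have hpow : z j ^ (k0 + (i : ℕ) + (l : ℕ))
        = z j ^ (i : ℕ) * z j ^ (k0 + (l : ℕ)) := by
      rw [← pow_add]; congr 1; omega
    calc ∑ s : Fin (m j), c j s * ((k0 + (i : ℕ) + (l : ℕ) : ℕ) : ℂ) ^ (s : ℕ)
            * z j ^ (k0 + (i : ℕ) + (l : ℕ))
        = ∑ s : Fin (m j), ∑ t : Fin (m j),
            c j s * (((s : ℕ).choose (t : ℕ) : ℂ) * (i : ℂ) ^ (t : ℕ)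
              * ((k0 + (l : ℕ) : ℕ) : ℂ) ^ ((s : ℕ) - (t : ℕ)))
              * (z j ^ (i : ℕ) * z j ^ (k0 + (l : ℕ))) := by
          apply Finset.sum_congr rfl
          intro s _
          rw [hcast, hpow, add_pow_fin s.2, Finset.mul_sum, Finset.sum_mul]
      _ = ∑ t : Fin (m j), ∑ s : Fin (m j),
            c j s * (((s : ℕ).choose (t : ℕ) : ℂ) * (i : ℂ) ^ (t : ℕ)
              * ((k0 + (l : ℕ) : ℕ) : ℂ) ^ ((s : ℕ) - (t : ℕ)))
              * (z j ^ (i : ℕ) * z j ^ (k0 + (l : ℕ))) := Finset.sum_comm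
      _ = ∑ t : Fin (m j), A i ⟨j, t⟩ * B ⟨j, t⟩ l := by
          apply Finset.sum_congr rfl
          intro t _
          show _ = ((i : ℂ) ^ (t : ℕ) * z j ^ (i : ℕ))
            * (z j ^ (k0 + (l : ℕ)) * (qpoly (c j) (t : ℕ)).eval ((k0 + (l : ℕ) : ℕ) : ℂ))
          rw [qpoly_eval, Finset.mul_sum, Finset.mul_sum]
          apply Finset.sum_congr rfl
          intro s _
          ring
  -- columns of A are linearly independent
  have hAcols : LinearIndependent ℂ (fun σ => Aᵀ σ) := by
    rw [Fintype.linearIndependent_iff]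
    intro g hg
    have hg' : ∀ i : Fin N, ∑ σ : (j : Fin n) × Fin (m j), g σ * A i σ = 0 := by
      intro i
      have := congrFun hg i
      simpa [Finset.sum_apply] using this
    set P : Fin n → Polynomial ℂ := fun j => papoly (fun t => g ⟨j, t⟩) with hP
    have hP0 : ∀ j, P j = 0 := by
      apply core_vanish M n z hz hz0 m hM.symm P
        (fun j => papoly_degree (hm j) _) 0
      intro k hk
      have hkN : k < N := lt_of_lt_of_le hk hN
      have := hg' ⟨k, hkN⟩
      rw [← Finset.univ_sigma_univ, Finset.sum_sigma] at this
      rw [← this]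
      simp only [hA, Matrix.of_apply]
      apply Finset.sum_congr rfl
      intro j _
      rw [hP, papoly_eval, Finset.sum_mul]
      apply Finset.sum_congr rfl
      intro t _
      show g ⟨j, t⟩ * ((0 + k : ℕ) : ℂ) ^ (t : ℕ) * z j ^ (0 + k)
        = g ⟨j, t⟩ * ((((⟨k, hkN⟩ : Fin N) : ℕ) : ℂ) ^ (t : ℕ) * z j ^ ((⟨k, hkN⟩ : Fin N) : ℕ))
      simp only [Fin.val_mk, Nat.zero_add, zero_add]
      ring
    intro σ
    have := hP0 σ.1
    have h2 := papoly_coeff (fun t => g ⟨σ.1, t⟩) σ.2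
    rw [show papoly (fun t => g ⟨σ.1, t⟩) = P σ.1 from rfl, this] at h2
    simpa using h2.symm
  -- rows of B are linearly independent
  have hBrows : LinearIndependent ℂ (fun σ => B σ) := by
    rw [Fintype.linearIndependent_iff]
    intro b hb
    have hb' : ∀ l : Fin N, ∑ σ : (j : Fin n) × Fin (m j), b σ * B σ l = 0 := by
      intro l
      have := congrFun hb l
      simpa [Finset.sum_apply] using this
    set R : Fin n → Polynomial ℂ :=
      fun j => ∑ t : Fin (m j), Polynomial.C (b ⟨j, t⟩) * qpoly (c j) (t : ℕ) with hR
    have hR0 : ∀ j, R j = 0 := by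
      apply core_vanish M n z hz hz0 m hM.symm R ?hdeg k0
      case hdeg =>
        intro j
        apply lt_of_le_of_lt (Polynomial.degree_sum_le _ _)
        rw [Finset.sup_lt_iff (by exact WithBot.bot_lt_coe _)]
        intro t _
        exact lt_of_le_of_lt (degree_C_mul_le' _) (qpoly_degree (hm j) _ _)
      intro k hk
      have hkN : k < N := lt_of_lt_of_le hk hN
      have := hb' ⟨k, hkN⟩
      rw [← Finset.univ_sigma_univ, Finset.sum_sigma] at this
      rw [← this]
      simp only [hB, Matrix.of_apply]
      apply Finset.sum_congr rfl
      intro j _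
      rw [hR]
      rw [Polynomial.eval_finset_sum, Finset.sum_mul]
      apply Finset.sum_congr rfl
      intro t _
      show (Polynomial.C (b ⟨j, t⟩) * qpoly (c j) (t : ℕ)).eval ((k0 + k : ℕ) : ℂ)
            * z j ^ (k0 + k)
          = b ⟨j, t⟩ * (z j ^ (k0 + ((⟨k, hkN⟩ : Fin N) : ℕ))
            * (qpoly (c j) (t : ℕ)).eval ((k0 + ((⟨k, hkN⟩ : Fin N) : ℕ) : ℕ) : ℂ))
      rw [Polynomial.eval_mul, Polynomial.eval_C]
      show b ⟨j, t⟩ * (qpoly (c j) (t : ℕ)).eval ((k0 + k : ℕ) : ℂ) * z j ^ (k0 + k)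
          = b ⟨j, t⟩ * (z j ^ (k0 + k) * (qpoly (c j) (t : ℕ)).eval ((k0 + k : ℕ) : ℂ))
      ring
    intro σ
    exact qpoly_triangular (hm σ.1) (c σ.1) (hc σ.1) _ (hR0 σ.1) σ.2
  -- rank computation
  have hAinj : Function.Injective A.mulVecLin := by
    have := Matrix.mulVec_injective_iff.mpr hAcols
    rwa [← Matrix.coe_mulVecLin] at this
  have hBtinj : Function.Injective (Bᵀ).mulVecLin := by
    have := (Matrix.mulVec_injective_iff : Function.Injective (Bᵀ).mulVec ↔ _).mpr hBrows
    rwa [← Matrix.coe_mulVecLin] at this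
  have hcard : Fintype.card ((j : Fin n) × Fin (m j)) = M := by
    rw [Fintype.card_sigma]
    simp [hM]
  rw [hfact]
  have h1 : (A * B).rank = B.rank := by
    unfold Matrix.rank
    rw [Matrix.mulVecLin_mul, LinearMap.range_comp]
    exact (LinearEquiv.finrank_eq
      (Submodule.equivMapOfInjective A.mulVecLin hAinj _)).symm
  have h2 : B.rank = M := by
    rw [← Matrix.rank_transpose]
    unfold Matrix.rank
    rw [LinearMap.finrank_range_of_inj hBtinj]
    rw [Module.finrank_pi]
    exact hcard
  rw [h1, h2]

end Main
end Aux
end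

section
/- For every k_0 ∈ ℕ and every N ≥ M, the shifted truncated Hankel matrix satisfies the companion-matrix relation H_{N,M}^{k_0+1} = H_{N,M}^{k_0} · C_M(P), where C_M(P) is the companion matrix of the Prony polynomial P. -/
open Polynomial Finset

/-- The `M × M` companion matrix of a polynomial `P`: subdiagonal entries equal
`1`, the last column is `(-P.coeff 0, …, -P.coeff (M-1))ᵀ`, all other entries
vanish. -/
noncomputable def companionMatrix (M : ℕ) (P : Polynomial ℂ) :
    Matrix (Fin M) (Fin M) ℂ :=
  Matrix.of fun i l =>
    if (l : ℕ) = M - 1 then -P.coeff (i : ℕ)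
    else if (i : ℕ) = (l : ℕ) + 1 then 1 else 0


noncomputable def theta (Q : ℂ[X]) : ℂ[X] := X * derivative Q

lemma theta_C_mul_X_pow (a : ℂ) (e : ℕ) :
    theta (C a * X ^ e) = C (a * e) * X ^ e := by
  cases e with
  | zero => simp [theta]
  | succ e =>
    unfold theta
    rw [derivative_C_mul, derivative_X_pow]
    push_cast
    rw [C_mul]
    ring

lemma theta_iter (P : ℂ[X]) (k s : ℕ) :
    theta^[s] (X ^ k * P) =
      ∑ t ∈ Finset.range (P.natDegree + 1),
        C (P.coeff t * ((k + t : ℕ) : ℂ) ^ s) * X ^ (k + t) := by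
  induction s with
  | zero =>
    simp only [Function.iterate_zero, id]
    conv_lhs => rw [P.as_sum_range]
    rw [Finset.mul_sum]
    refine Finset.sum_congr rfl fun t _ => ?_
    rw [← C_mul_X_pow_eq_monomial]
    push_cast
    ring
  | succ s ih =>
    rw [Function.iterate_succ_apply', ih]
    unfold theta
    rw [derivative_sum, Finset.mul_sum]
    refine Finset.sum_congr rfl fun t _ => ?_
    have := theta_C_mul_X_pow (P.coeff t * ((k + t : ℕ) : ℂ) ^ s) (k + t)
    unfold theta at this
    rw [this]
    congr 1
    rw [pow_succ]
    push_cast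
    ring

lemma dvd_theta {a : ℂ} {Q : ℂ[X]} {r : ℕ} (h : (X - C a) ^ (r + 1) ∣ Q) :
    (X - C a) ^ r ∣ theta Q := by
  obtain ⟨R, rfl⟩ := h
  refine ⟨X * (C ((r : ℂ) + 1) * R + (X - C a) * derivative R), ?_⟩
  unfold theta
  rw [derivative_mul, derivative_pow, derivative_sub, derivative_X, derivative_C]
  push_cast
  ring

lemma dvd_theta_iter {a : ℂ} {P : ℂ[X]} {mj : ℕ} (h : (X - C a) ^ mj ∣ P)
    (k : ℕ) : ∀ s, s ≤ mj → (X - C a) ^ (mj - s) ∣ theta^[s] (X ^ k * P) := by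
  intro s
  induction s with
  | zero => intro _; simpa using h.mul_left (X ^ k)
  | succ s ih =>
    intro hs
    rw [Function.iterate_succ_apply']
    have h2 := ih (Nat.le_of_succ_le hs)
    have he : mj - s = (mj - (s + 1)) + 1 := by omega
    rw [he] at h2
    exact dvd_theta h2

lemma prony_sum (P : ℂ[X]) {a : ℂ} {mj : ℕ} (h : (X - C a) ^ mj ∣ P)
    (k s : ℕ) (hs : s < mj) :
    ∑ t ∈ Finset.range (P.natDegree + 1),
      P.coeff t * ((k + t : ℕ) : ℂ) ^ s * a ^ (k + t) = 0 := by
  have hd := dvd_theta_iter h k s (le_of_lt hs)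
  have h1 : (X - C a) ∣ theta^[s] (X ^ k * P) :=
    dvd_trans (dvd_pow_self _ (by omega)) hd
  have h0 : (theta^[s] (X ^ k * P)).eval a = 0 :=
    eval_eq_zero_of_dvd_of_eval_eq_zero h1 (by simp)
  rw [theta_iter, eval_finset_sum] at h0
  simpa [mul_assoc] using h0

/-- the shifted truncated Hankel matrix satisfies
`H_{N,M}^{k0+1} = H_{N,M}^{k0} * C_M(P)`, where `C_M(P)` is the companion
matrix of the Prony polynomial `P = ∏ j, (X - z j) ^ m j`. -/
theorem hankel_shift_companion (n : ℕ) (hn : 1 ≤ n) (z : Fin n → ℂ)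
    (hz : Function.Injective z) (hz0 : ∀ j, z j ≠ 0)
    (m : Fin n → ℕ) (hm : ∀ j, 1 ≤ m j) (M : ℕ) (hM : M = ∑ j, m j)
    (c : (j : Fin n) → Fin (m j) → ℂ) (k0 N : ℕ) (hN : M ≤ N) :
    hankel (hmes z m c) (k0 + 1) N M =
      hankel (hmes z m c) k0 N M *
        companionMatrix M (∏ j, (X - C (z j)) ^ m j) := by
  set P := ∏ j, (X - C (z j)) ^ m j with hP
  have hmonic : P.Monic :=
    monic_prod_of_monic _ _ fun j _ => (monic_X_sub_C (z j)).pow _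
  have hdeg : P.natDegree = M := by
    rw [hM, hP, natDegree_prod]
    · exact Finset.sum_congr rfl fun j _ => by
        rw [natDegree_pow, natDegree_X_sub_C, mul_one]
    · intro j _; exact pow_ne_zero _ (X_sub_C_ne_zero (z j))
  have hM1 : 1 ≤ M := by
    rw [hM]
    calc 1 ≤ m ⟨0, hn⟩ := hm _
      _ ≤ ∑ j, m j := Finset.single_le_sum (fun j _ => Nat.zero_le _) (Finset.mem_univ _)
  have key : ∀ K : ℕ,
      ∑ t ∈ Finset.range (M + 1), P.coeff t * hmes z m c (K + t) = 0 := by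
    intro K
    have inner : ∀ (j : Fin n) (s : Fin (m j)),
        ∑ t ∈ Finset.range (M + 1),
          P.coeff t * (c j s * ((K + t : ℕ) : ℂ) ^ (s : ℕ) * z j ^ (K + t)) = 0 := by
      intro j s
      have hdvd : (X - C (z j)) ^ m j ∣ P := Finset.dvd_prod_of_mem _ (Finset.mem_univ j)
      have h0 := prony_sum P hdvd K s s.isLt
      rw [hdeg] at h0
      calc ∑ t ∈ Finset.range (M + 1),
            P.coeff t * (c j s * ((K + t : ℕ) : ℂ) ^ (s : ℕ) * z j ^ (K + t))
          = c j s * ∑ t ∈ Finset.range (M + 1),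
              P.coeff t * ((K + t : ℕ) : ℂ) ^ (s : ℕ) * z j ^ (K + t) := by
            rw [Finset.mul_sum]; exact Finset.sum_congr rfl fun t _ => by ring
        _ = 0 := by rw [h0, mul_zero]
    simp only [hmes, Finset.mul_sum]
    rw [Finset.sum_comm]
    refine Finset.sum_eq_zero fun j _ => ?_
    rw [Finset.sum_comm]
    exact Finset.sum_eq_zero fun s _ => inner j s
  ext i l
  rw [Matrix.mul_apply]
  simp only [hankel, companionMatrix, Matrix.of_apply]
  by_cases hl : (l : ℕ) = M - 1
  · simp only [hl, if_true]
    have harg : k0 + 1 + (i : ℕ) + (M - 1) = k0 + (i : ℕ) + M := by omega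
    rw [harg]
    have hK := key (k0 + (i : ℕ))
    have hcM : P.coeff M = 1 := by rw [← hdeg]; exact hmonic.coeff_natDegree
    rw [Finset.sum_range_succ, hcM, one_mul] at hK
    have hsum : ∑ t : Fin M, hmes z m c (k0 + (i : ℕ) + (t : ℕ)) * (-P.coeff (t : ℕ))
        = -∑ t ∈ Finset.range M, P.coeff t * hmes z m c (k0 + (i : ℕ) + t) := by
      rw [Fin.sum_univ_eq_sum_range (fun t => hmes z m c (k0 + (i : ℕ) + t) * (-P.coeff t)) M,
        ← Finset.sum_neg_distrib]
      exact Finset.sum_congr rfl fun t _ => by ring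
    rw [hsum]
    exact eq_neg_of_add_eq_zero_right hK
  · simp only [hl, if_false]
    have hlt : (l : ℕ) + 1 < M := by omega
    rw [Finset.sum_eq_single (⟨(l : ℕ) + 1, hlt⟩ : Fin M)]
    · simp only [if_true, mul_one]
      congr 1
      omega
    · intro b _ hb
      have hb' : ¬ ((b : ℕ) = (l : ℕ) + 1) := fun h => hb (Fin.ext h)
      rw [if_neg hb', mul_zero]
    · intro h; exact absurd (Finset.mem_univ _) h
end

section
/- Assume the leading coefficients c_{j, m_j − 1} are nonzero for every j = 1, …, n. Then for every k_0 ∈ ℕ, every N ≥ M, and every z ∈ ℂ, the complex number z is a generalized eigenvalue of the matrix pencil, i.e. det((H_{N,M}^{k_0})^* (H_{N,M}^{k_0+1} − z · H_{N,M}^{k_0})) = 0, if and only if z ∈ {z_1, …, z_n}; moreover, each z_j is a root of the polynomial z ↦ det((H_{N,M}^{k_0})^* (H_{N,M}^{k_0+1} − z · H_{N,M}^{k_0})) of multiplicity exactly m_j. -/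
open Polynomial Finset Matrix

/-- The polynomial `w ↦ det(Aᴴ * B - w • Aᴴ * A)`, i.e. the determinant of the
matrix of polynomials with entries `(Aᴴ * B) i l - X * (Aᴴ * A) i l`. -/
noncomputable def pencilPoly {N M : ℕ} (A B : Matrix (Fin N) (Fin M) ℂ) :
    Polynomial ℂ :=
  (Matrix.of fun i l : Fin M =>
    C ((Aᴴ * B) i l) - X * C ((Aᴴ * A) i l)).det

namespace HankelAux


def compMat {R : Type*} [CommRing R] (M : ℕ) (a : Fin M → R) : Matrix (Fin M) (Fin M) R :=
  Matrix.of fun i l => (if (l : ℕ) = M - 1 then -(a i) else 0) +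
    (if (i : ℕ) = (l : ℕ) + 1 then 1 else 0)

lemma det_compMat_sub {R : Type*} [CommRing R] :
    ∀ (M : ℕ) (a : Fin M → R) (b : R),
      (compMat M a - b • (1 : Matrix (Fin M) (Fin M) R)).det
        = (-1) ^ M * (b ^ M + ∑ l, a l * b ^ (l : ℕ)) := by
  intro M
  induction M with
  | zero => intro a b; simp
  | succ M ih =>
    intro a b
    rcases Nat.eq_zero_or_pos M with hM | hM
    · subst hM
      rw [Matrix.det_fin_one]
      simp [compMat]
      ring
    · have h0last : (0 : Fin (M+1)) ≠ Fin.last M := by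
        simp [Fin.ext_iff]; omega
      rw [Matrix.det_succ_row_zero]
      rw [← Finset.sum_subset (Finset.subset_univ ({0, Fin.last M} : Finset (Fin (M+1)))) ?van]
      case van =>
        intro j _ hj
        simp only [Finset.mem_insert, Finset.mem_singleton, not_or] at hj
        have hj0 : (j : ℕ) ≠ 0 := fun h => hj.1 (Fin.ext h)
        have hjM : (j : ℕ) ≠ M := fun h => hj.2 (Fin.ext (by simp [h]))
        have : (compMat (M+1) a - b • 1) 0 j = 0 := by
          simp only [Matrix.sub_apply, Matrix.smul_apply, Matrix.one_apply, compMat,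
            Matrix.of_apply, Fin.ext_iff, Fin.val_zero, Fin.val_last]
          split_ifs <;> simp_all <;> omega
        rw [this]
        ring
      rw [Finset.sum_pair h0last]
      have hD00 : (compMat (M+1) a - b • (1 : Matrix (Fin (M+1)) (Fin (M+1)) R)) 0 0 = -b := by
        simp only [Matrix.sub_apply, Matrix.smul_apply, Matrix.one_apply, compMat,
          Matrix.of_apply, Fin.val_zero, Nat.add_sub_cancel]
        split_ifs <;> simp_all <;> omega
      have hD0last : (compMat (M+1) a - b • (1 : Matrix (Fin (M+1)) (Fin (M+1)) R)) 0
          (Fin.last M) = -(a 0) := by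
        simp only [Matrix.sub_apply, Matrix.smul_apply, Matrix.one_apply, compMat,
          Matrix.of_apply, Fin.val_zero, Fin.val_last, Nat.add_sub_cancel]
        rw [if_neg h0last]
        split_ifs <;> simp at * <;> omega
      have hsub0 : (compMat (M+1) a - b • (1 : Matrix (Fin (M+1)) (Fin (M+1)) R)).submatrix
          Fin.succ (Fin.succAbove 0) = compMat M (fun i => a i.succ) - b • 1 := by
        ext i l
        simp only [Matrix.submatrix_apply, Fin.succAbove_zero, compMat, Matrix.of_apply,
          Matrix.sub_apply, Matrix.smul_apply, Matrix.one_apply, Fin.ext_iff, Fin.val_succ,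
          Nat.add_sub_cancel]
        simp only [show ((l:ℕ) + 1 = M ↔ (l:ℕ) = M - 1) from by omega,
          show ((i:ℕ) + 1 = (l:ℕ) + 1 + 1 ↔ (i:ℕ) = (l:ℕ) + 1) from by omega,
          show ((i:ℕ) + 1 = (l:ℕ) + 1 ↔ (i:ℕ) = (l:ℕ)) from by omega]
      have hdetlast : ((compMat (M+1) a - b • (1 : Matrix (Fin (M+1)) (Fin (M+1)) R)).submatrix
          Fin.succ (Fin.succAbove (Fin.last M))).det = 1 := by
        have htri : ((compMat (M+1) a - b • (1 : Matrix (Fin (M+1)) (Fin (M+1)) R)).submatrix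
            Fin.succ (Fin.succAbove (Fin.last M))).BlockTriangular id := by
          intro i l hil
          simp only [id] at hil
          simp only [Matrix.submatrix_apply, Fin.succAbove_last, compMat, Matrix.of_apply,
            Matrix.sub_apply, Matrix.smul_apply, Matrix.one_apply, Fin.ext_iff, Fin.val_succ,
            Fin.coe_castSucc, Nat.add_sub_cancel]
          rw [if_neg (by omega : ¬ (l:ℕ) = M), if_neg (by omega), if_neg (by omega)]
          simp
        rw [Matrix.det_of_upperTriangular htri]
        refine Finset.prod_eq_one fun i _ => ?_
        simp only [Matrix.submatrix_apply, Fin.succAbove_last, compMat, Matrix.of_apply,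
          Matrix.sub_apply, Matrix.smul_apply, Matrix.one_apply, Fin.ext_iff, Fin.val_succ,
          Fin.coe_castSucc, Nat.add_sub_cancel]
        rw [if_neg (by omega : ¬ (i:ℕ) = M), if_neg (by omega : ¬ (i:ℕ) + 1 = (i:ℕ))]
        simp
      rw [hD00, hD0last, hsub0, hdetlast, ih]
      simp only [Fin.val_zero, Fin.val_last, pow_zero, one_mul, mul_one]
      rw [Fin.sum_univ_succ]
      simp only [Fin.val_zero, Fin.val_succ, pow_zero, mul_one, pow_succ]
      rw [show (∑ l : Fin M, a l.succ * (b ^ (l:ℕ) * b)) = (∑ l : Fin M, a l.succ * b ^ (l:ℕ)) * b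
        from by rw [Finset.sum_mul]; exact Finset.sum_congr rfl fun l _ => by ring]
      ring

/-- The shift operator on sequences. -/
def S : Module.End ℂ (ℕ → ℂ) where
  toFun f := fun k => f (k + 1)
  map_add' := by intros; rfl
  map_smul' := by intros; rfl

lemma S_pow_apply (l : ℕ) : ∀ (f : ℕ → ℂ) (k : ℕ), (S ^ l) f k = f (k + l) := by
  induction l with
  | zero => intro f k; rfl
  | succ l ih =>
    intro f k
    rw [pow_succ, Module.End.mul_apply]
    rw [ih]
    show f (k + l + 1) = f (k + (l + 1))
    congr 1

lemma aeval_S_apply {p : ℂ[X]} {K : ℕ} (hK : p.natDegree < K) (f : ℕ → ℂ) (k : ℕ) :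
    (aeval S p) f k = ∑ l ∈ range K, p.coeff l * f (k + l) := by
  rw [aeval_eq_sum_range' hK]
  rw [LinearMap.coe_sum, Finset.sum_apply, Finset.sum_apply]
  refine Finset.sum_congr rfl fun l _ => ?_
  rw [LinearMap.smul_apply, Pi.smul_apply, S_pow_apply, smul_eq_mul]

lemma aeval_S_mul_apply (a b : ℂ[X]) (f : ℕ → ℂ) :
    aeval S (a * b) f = aeval S a (aeval S b f) := by
  rw [_root_.map_mul, Module.End.mul_apply]

/-- basic term -/
def e (z : ℂ) (s : ℕ) : ℕ → ℂ := fun k => (k : ℂ) ^ s * z ^ k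

lemma aeval_S_e_zero (r : ℂ[X]) (z : ℂ) : aeval S r (e z 0) = r.eval z • e z 0 := by
  funext k
  rw [aeval_S_apply (Nat.lt_succ_self _)]
  rw [Pi.smul_apply, smul_eq_mul, eval_eq_sum_range]
  rw [Finset.sum_mul]
  refine Finset.sum_congr rfl fun l _ => ?_
  simp only [e, pow_zero, one_mul, pow_add]
  ring


lemma aeval_S_X_sub_C (w : ℂ) (f : ℕ → ℂ) :
    aeval S (X - C w) f = fun k => f (k + 1) - w * f k := by
  funext k
  rw [map_sub, LinearMap.sub_apply, aeval_X, aeval_C]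
  simp only [Pi.sub_apply]
  rw [Module.algebraMap_end_apply]
  rfl

lemma aeval_S_e_step (z : ℂ) (s : ℕ) :
    aeval S (X - C z) (e z s) =
      z • ∑ p ∈ range s, (s.choose p : ℂ) • e z p := by
  funext k
  rw [aeval_S_X_sub_C]
  simp only [e, Pi.smul_apply, Finset.sum_apply, smul_eq_mul]
  push_cast
  have hb : ((k : ℂ) + 1) ^ s = ∑ p ∈ range (s + 1), (k : ℂ) ^ p * (s.choose p : ℂ) := by
    rw [add_pow]
    refine Finset.sum_congr rfl fun p _ => ?_
    rw [one_pow, mul_one]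
  rw [Finset.sum_range_succ, Nat.choose_self] at hb
  push_cast at hb
  have hb' : ((k : ℂ) + 1) ^ s - (k:ℂ)^s = ∑ p ∈ range s, (k : ℂ) ^ p * (s.choose p : ℂ) := by
    rw [hb]; ring
  rw [pow_succ]
  calc (↑k + 1) ^ s * (z ^ k * z) - z * ((k:ℂ) ^ s * z ^ k)
      = (((k:ℂ) + 1) ^ s - (k:ℂ)^s) * (z ^ k * z) := by ring
    _ = z * ∑ p ∈ range s, ↑(s.choose p) * ((k:ℂ) ^ p * z ^ k) := by
        rw [hb', Finset.sum_mul, Finset.mul_sum]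
        refine Finset.sum_congr rfl fun p _ => ?_
        ring

lemma aeval_S_e_kill (z : ℂ) : ∀ (s t : ℕ), s < t → aeval S ((X - C z) ^ t) (e z s) = 0 := by
  intro s
  induction s using Nat.strong_induction_on with
  | _ s ih =>
    intro t hst
    obtain ⟨t', rfl⟩ : ∃ t', t = t' + 1 := ⟨t - 1, by omega⟩
    rw [pow_succ, aeval_S_mul_apply, aeval_S_e_step, _root_.map_smul, map_sum]
    rw [smul_eq_zero]
    right
    refine Finset.sum_eq_zero fun p hp => ?_
    rw [_root_.map_smul, ih p (Finset.mem_range.mp hp) t' (by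
      have := Finset.mem_range.mp hp; omega), smul_zero]

lemma aeval_S_e_exact (z : ℂ) (s : ℕ) :
    aeval S ((X - C z) ^ s) (e z s) = (z ^ s * (s.factorial : ℂ)) • e z 0 := by
  induction s with
  | zero => simp [e]
  | succ s ih =>
    rw [pow_succ, aeval_S_mul_apply, aeval_S_e_step, _root_.map_smul, map_sum,
      Finset.sum_range_succ]
    have h0 : ∀ p ∈ range s, ((((s+1).choose p : ℂ)) • aeval S ((X - C z) ^ s) (e z p)) = 0 := by
      intro p hp
      rw [aeval_S_e_kill z p s (Finset.mem_range.mp hp), smul_zero]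
    rw [_root_.map_smul]
    rw [Finset.sum_eq_zero (fun p hp => by rw [_root_.map_smul, aeval_S_e_kill z p s (Finset.mem_range.mp hp), smul_zero])]
    rw [zero_add, ih, Nat.choose_succ_self_right]
    rw [smul_smul, smul_smul]
    congr 1
    push_cast [Nat.factorial_succ]
    ring


lemma aeval_S_eq_zero_of_dvd {w : ℂ} {t s : ℕ} (hst : s < t) {P : ℂ[X]}
    (hP : (X - C w) ^ t ∣ P) : aeval S P (e w s) = 0 := by
  obtain ⟨W, hW⟩ := hP
  rw [hW, mul_comm, aeval_S_mul_apply, aeval_S_e_kill w s t hst, map_zero]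

lemma hmes_eq_sum {n : ℕ} (z : Fin n → ℂ) (m : Fin n → ℕ)
    (c : (j : Fin n) → Fin (m j) → ℂ) :
    hmes z m c = ∑ j, ∑ s : Fin (m j), c j s • e (z j) (s : ℕ) := by
  funext k
  simp only [hmes, Finset.sum_apply, Pi.smul_apply, smul_eq_mul, e]
  refine Finset.sum_congr rfl fun j _ => Finset.sum_congr rfl fun s _ => ?_
  ring

section Main

variable {n : ℕ} (z : Fin n → ℂ) (hz : Function.Injective z) (hz0 : ∀ j, z j ≠ 0)
  (m : Fin n → ℕ) (hm : ∀ j, 1 ≤ m j)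
  (c : (j : Fin n) → Fin (m j) → ℂ)
  (hc : ∀ j, c j ⟨m j - 1, Nat.sub_lt (hm j) one_pos⟩ ≠ 0)

/-- the annihilating polynomial -/
noncomputable def pAnn (z : Fin n → ℂ) (m : Fin n → ℕ) : ℂ[X] :=
  ∏ i, (X - C (z i)) ^ (m i)

lemma pAnn_monic : (pAnn z m).Monic :=
  monic_prod_of_monic _ _ fun i _ => (monic_X_sub_C _).pow _

lemma pAnn_natDegree : (pAnn z m).natDegree = ∑ i, m i := by
  rw [pAnn, natDegree_prod]
  · exact Finset.sum_congr rfl fun i _ => by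
      rw [natDegree_pow, natDegree_X_sub_C, mul_one]
  · exact fun i _ => pow_ne_zero _ (X_sub_C_ne_zero _)

lemma pAnn_ann : aeval S (pAnn z m) (hmes z m c) = 0 := by
  rw [hmes_eq_sum, map_sum]
  refine Finset.sum_eq_zero fun j _ => ?_
  rw [map_sum]
  refine Finset.sum_eq_zero fun s _ => ?_
  have hdvd : ((X - C (z j)) ^ (m j)) ∣ pAnn z m :=
    Finset.dvd_prod_of_mem _ (Finset.mem_univ j)
  rw [_root_.map_smul, aeval_S_eq_zero_of_dvd s.isLt hdvd, smul_zero]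

include hz hz0 hm hc in
lemma key_eval (j : Fin n) (q₁ : ℂ[X])
    (h0 : aeval S ((q₁ * ∏ i ∈ univ.erase j, (X - C (z i)) ^ (m i)) *
        (X - C (z j)) ^ (m j - 1)) (hmes z m c) = 0) :
    q₁.eval (z j) = 0 := by
  set Q : ℂ[X] := ∏ i ∈ univ.erase j, (X - C (z i)) ^ (m i) with hQ
  set P : ℂ[X] := (q₁ * Q) * (X - C (z j)) ^ (m j - 1) with hP
  have hexp : aeval S P (hmes z m c) =
      (c j ⟨m j - 1, Nat.sub_lt (hm j) one_pos⟩ * ((z j) ^ (m j - 1) * ((m j - 1).factorial : ℂ))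
        * (q₁ * Q).eval (z j)) • e (z j) 0 := by
    rw [hmes_eq_sum, map_sum]
    rw [Finset.sum_eq_single j]
    · rw [map_sum, Finset.sum_eq_single (⟨m j - 1, Nat.sub_lt (hm j) one_pos⟩ : Fin (m j))]
      · rw [_root_.map_smul, hP, aeval_S_mul_apply, aeval_S_e_exact,
          _root_.map_smul, aeval_S_e_zero, smul_smul, smul_smul]
      · intro s _ hs
        have hslt : (s : ℕ) < m j - 1 := by
          have := s.isLt
          have : (s : ℕ) ≠ m j - 1 := fun h => hs (Fin.ext h)
          omega
        rw [_root_.map_smul, aeval_S_eq_zero_of_dvd hslt (dvd_mul_left _ _), smul_zero]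
      · intro h; exact absurd (Finset.mem_univ _) h
    · intro i _ hij
      rw [map_sum]
      refine Finset.sum_eq_zero fun s _ => ?_
      have hdvd : (X - C (z i)) ^ (m i) ∣ P := by
        refine Dvd.dvd.mul_right (Dvd.dvd.mul_left ?_ q₁) _
        exact Finset.dvd_prod_of_mem _ (Finset.mem_erase.mpr ⟨hij, Finset.mem_univ i⟩)
      rw [_root_.map_smul, aeval_S_eq_zero_of_dvd s.isLt hdvd, smul_zero]
    · intro h; exact absurd (Finset.mem_univ _) h
  rw [h0] at hexp
  have h1 : (c j ⟨m j - 1, Nat.sub_lt (hm j) one_pos⟩ *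
      ((z j) ^ (m j - 1) * ((m j - 1).factorial : ℂ)) * (q₁ * Q).eval (z j)) = 0 := by
    have := congrFun hexp.symm 0
    simpa [e] using this
  have hQne : Q.eval (z j) ≠ 0 := by
    rw [hQ, eval_prod]
    refine Finset.prod_ne_zero_iff.mpr fun i hi => ?_
    simp only [eval_pow, eval_sub, eval_X, eval_C]
    exact pow_ne_zero _ (sub_ne_zero_of_ne fun h => (Finset.mem_erase.mp hi).1 (hz h).symm)
  have h2 := h1
  rw [eval_mul] at h2
  rcases mul_eq_zero.mp h2 with h3 | h3
  · rcases mul_eq_zero.mp h3 with h4 | h4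
    · exact absurd h4 (hc j)
    · rcases mul_eq_zero.mp h4 with h5 | h5
      · exact absurd h5 (pow_ne_zero _ (hz0 j))
      · exact absurd h5 (Nat.cast_ne_zero.mpr (Nat.factorial_ne_zero _))
  · rcases mul_eq_zero.mp h3 with h4 | h4
    · exact h4
    · exact absurd h4 hQne


include hz hz0 hm hc in
lemma ann_imp_dvd (q : ℂ[X]) (hq : aeval S q (hmes z m c) = 0) (j : Fin n) :
    (X - C (z j)) ^ (m j) ∣ q := by
  suffices h : ∀ r, r ≤ m j → (X - C (z j)) ^ r ∣ q from h (m j) le_rfl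
  intro r
  induction r with
  | zero => intro; exact one_dvd q
  | succ r ih =>
    intro hr
    obtain ⟨q₁, hq₁⟩ := ih (by omega)
    have hpow : (X - C (z j)) ^ (m j - 1 - r) * (X - C (z j)) ^ r
        = (X - C (z j)) ^ (m j - 1) := by
      rw [← pow_add]; congr 1; omega
    have h0 : aeval S ((q₁ * ∏ i ∈ univ.erase j, (X - C (z i)) ^ (m i)) *
        (X - C (z j)) ^ (m j - 1)) (hmes z m c) = 0 := by
      have e1 : (q₁ * ∏ i ∈ univ.erase j, (X - C (z i)) ^ (m i)) *
          (X - C (z j)) ^ (m j - 1)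
          = ((∏ i ∈ univ.erase j, (X - C (z i)) ^ (m i)) *
              (X - C (z j)) ^ (m j - 1 - r)) * q := by
        rw [hq₁, ← hpow]; ring
      rw [e1, aeval_S_mul_apply, hq, map_zero]
    have := key_eval z hz hz0 m hm c hc j q₁ h0
    obtain ⟨q₂, hq₂⟩ := dvd_iff_isRoot.mpr this
    rw [hq₁, hq₂, pow_succ]
    ring_nf
    exact Dvd.intro q₂ (by ring)

include hz hz0 hm hc in
lemma ann_imp_zero (q : ℂ[X]) (hq : aeval S q (hmes z m c) = 0)
    (hdeg : q.natDegree < ∑ i, m i) : q = 0 := by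
  by_contra hne
  have hdvd : pAnn z m ∣ q := by
    rw [pAnn]
    refine Finset.prod_dvd_of_coprime ?_ fun j _ => ann_imp_dvd z hz hz0 m hm c hc q hq j
    intro a _ b _ hab
    exact (isCoprime_X_sub_C_of_isUnit_sub
      (isUnit_iff_ne_zero.mpr (sub_ne_zero_of_ne fun h => hab (hz h)))).pow
  have := natDegree_le_of_dvd hdvd hne
  rw [pAnn_natDegree] at this
  omega


lemma pAnn_coeff_top : (pAnn z m).coeff (∑ i, m i) = 1 := by
  have := (pAnn_monic z m).coeff_natDegree
  rwa [pAnn_natDegree] at this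

include hz0 in
lemma pAnn_coeff_zero_ne : (pAnn z m).coeff 0 ≠ 0 := by
  rw [coeff_zero_eq_eval_zero, pAnn, eval_prod]
  refine Finset.prod_ne_zero_iff.mpr fun i _ => ?_
  simp only [eval_pow, eval_sub, eval_X, eval_C, zero_sub]
  exact pow_ne_zero _ (neg_ne_zero.mpr (hz0 i))

lemma pAnn_rec (f : ℕ → ℂ) (hf : aeval S (pAnn z m) f = 0) (k : ℕ) :
    (pAnn z m).coeff 0 * f k
      + ∑ l ∈ range (∑ i, m i), (pAnn z m).coeff (l + 1) * f (k + (l + 1)) = 0 := by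
  have h1 : (0 : ℂ) = ∑ l ∈ range ((∑ i, m i) + 1), (pAnn z m).coeff l * f (k + l) := by
    rw [← aeval_S_apply (by rw [pAnn_natDegree]; omega) f k, hf]; rfl
  rw [Finset.sum_range_succ'] at h1
  rw [show k + 0 = k from rfl] at h1
  linear_combination -h1

lemma pAnn_rec' (f : ℕ → ℂ) (hf : aeval S (pAnn z m) f = 0) (k : ℕ) :
    f (k + ∑ i, m i)
      = -∑ l ∈ range (∑ i, m i), (pAnn z m).coeff l * f (k + l) := by
  have h1 : (0 : ℂ) = ∑ l ∈ range ((∑ i, m i) + 1), (pAnn z m).coeff l * f (k + l) := by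
    rw [← aeval_S_apply (by rw [pAnn_natDegree]; omega) f k, hf]; rfl
  rw [Finset.sum_range_succ, pAnn_coeff_top] at h1
  linear_combination -h1

include hz0 in
lemma vanish_all (hMpos : 0 < ∑ i, m i) (f : ℕ → ℂ)
    (hf : aeval S (pAnn z m) f = 0) (k0 N : ℕ) (hN : (∑ i, m i) ≤ N)
    (hwin : ∀ i, i < N → f (k0 + i) = 0) : ∀ k, f k = 0 := by
  set Msum := ∑ i, m i with hMsum
  have fwd : ∀ d, f (k0 + d) = 0 := by
    intro d
    induction d using Nat.strong_induction_on with
    | _ d ih =>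
      by_cases hd : d < N
      · exact hwin d hd
      · have hdM : Msum ≤ d := le_trans hN (le_of_not_gt hd)
        have h1 := pAnn_rec' z m f hf (k0 + (d - Msum))
        rw [show k0 + (d - Msum) + Msum = k0 + d by omega] at h1
        rw [h1]
        rw [Finset.sum_eq_zero, neg_zero]
        intro l hl
        have hlM := Finset.mem_range.mp hl
        rw [show k0 + (d - Msum) + l = k0 + (d - Msum + l) by omega,
          ih (d - Msum + l) (by omega), mul_zero]
  have bwd : ∀ t k, k0 ≤ k + t → f k = 0 := by
    intro t
    induction t with
    | zero => intro k hk; have := fwd (k - k0); rwa [show k0 + (k - k0) = k by omega] at this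
    | succ t ih =>
      intro k hk
      by_cases hk' : k0 ≤ k + t
      · exact ih k hk'
      · have h1 := pAnn_rec z m f hf k
        have h2 : ∑ l ∈ range Msum, (pAnn z m).coeff (l + 1) * f (k + (l + 1)) = 0 := by
          refine Finset.sum_eq_zero fun l _ => ?_
          rw [ih (k + (l + 1)) (by omega), mul_zero]
        rw [h2, add_zero] at h1
        rcases mul_eq_zero.mp h1 with h3 | h3
        · exact absurd h3 (pAnn_coeff_zero_ne z hz0 m)
        · exact h3
  intro k
  exact bwd (k0 + 1) k (by omega)


open scoped ComplexOrder in
include hz hz0 hm hc in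
lemma detG_ne (M : ℕ) (hM : M = ∑ i, m i) (hMpos : 0 < M) (k0 N : ℕ) (hN : M ≤ N) :
    ((hankel (hmes z m c) k0 N M)ᴴ * hankel (hmes z m c) k0 N M).det ≠ 0 := by
  intro hdet
  obtain ⟨v, hv, hGv⟩ := (Matrix.exists_mulVec_eq_zero_iff).mpr hdet
  set A := hankel (hmes z m c) k0 N M with hA
  have hu : A.mulVec v = 0 := by
    have h1 : star v ⬝ᵥ (Aᴴ * A).mulVec v = 0 := by rw [hGv, dotProduct_zero]
    rw [← Matrix.mulVec_mulVec, Matrix.dotProduct_mulVec, ← Matrix.star_mulVec] at h1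
    exact dotProduct_star_self_eq_zero.mp h1
  set q : ℂ[X] := ∑ l : Fin M, C (v l) * X ^ (l : ℕ) with hq
  have hqdeg : q.natDegree < M := by
    have h2 : q.natDegree ≤ M - 1 := by
      refine Polynomial.natDegree_sum_le_of_forall_le _ _ fun l _ => ?_
      exact le_trans (natDegree_C_mul_X_pow_le _ _) (by have := l.isLt; omega)
    omega
  have hqcoeff : ∀ l : Fin M, q.coeff (l : ℕ) = v l := by
    intro l
    rw [hq, finset_sum_coeff]
    rw [Finset.sum_eq_single l]
    · rw [coeff_C_mul, coeff_X_pow, if_pos rfl, mul_one]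
    · intro b _ hne
      rw [coeff_C_mul, coeff_X_pow, if_neg (fun h => hne (Fin.ext h.symm)), mul_zero]
    · intro hmem; exact absurd (Finset.mem_univ _) hmem
  set g : ℕ → ℂ := aeval S q (hmes z m c) with hg
  have hwin : ∀ i, i < N → g (k0 + i) = 0 := by
    intro i hi
    have h3 := congrFun hu ⟨i, hi⟩
    simp only [Matrix.mulVec, dotProduct, Pi.zero_apply] at h3
    rw [hg, aeval_S_apply hqdeg, ← Fin.sum_univ_eq_sum_range, ← h3]
    refine Finset.sum_congr rfl fun l _ => ?_
    rw [hqcoeff l]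
    simp only [hA, hankel, Matrix.of_apply]
    ring
  have hgann : aeval S (pAnn z m) g = 0 := by
    rw [hg, ← aeval_S_mul_apply, mul_comm, aeval_S_mul_apply,
      pAnn_ann z m c, map_zero]
  have hall : ∀ k, g k = 0 :=
    vanish_all z hz0 m (by omega) g hgann k0 N (by omega) hwin
  have hq0 : q = 0 := ann_imp_zero z hz hz0 m hm c hc q (funext hall) (by omega)
  refine hv (funext fun l => ?_)
  rw [← hqcoeff l, hq0, coeff_zero]
  rfl

lemma hankel_succ_factor (M : ℕ) (hM : M = ∑ i, m i) (k0 N : ℕ) :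
    hankel (hmes z m c) (k0 + 1) N M
      = hankel (hmes z m c) k0 N M * compMat M (fun l => (pAnn z m).coeff (l : ℕ)) := by
  ext i l
  rw [Matrix.mul_apply]
  by_cases hl : (l : ℕ) = M - 1
  · have hMpos : 0 < M := l.pos
    have hstep : ∀ t : Fin M,
        hankel (hmes z m c) k0 N M i t * compMat M (fun l' => (pAnn z m).coeff (l' : ℕ)) t l
          = -((pAnn z m).coeff (t : ℕ) * hmes z m c (k0 + (i : ℕ) + (t : ℕ))) := by
      intro t
      simp only [compMat, Matrix.of_apply, hankel, if_pos hl]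
      rw [if_neg (by have := t.isLt; omega : ¬ (t : ℕ) = (l : ℕ) + 1)]
      ring
    rw [Finset.sum_congr rfl fun t _ => hstep t, Finset.sum_neg_distrib]
    have hrec := pAnn_rec' z m (hmes z m c) (pAnn_ann z m c) (k0 + (i : ℕ))
    rw [← hM] at hrec
    have harg : k0 + 1 + (i : ℕ) + (l : ℕ) = k0 + (i : ℕ) + M := by omega
    simp only [hankel, Matrix.of_apply]
    rw [harg, hrec, ← Fin.sum_univ_eq_sum_range]
  · have hl1 : (l : ℕ) + 1 < M := by have := l.isLt; omega
    rw [Finset.sum_eq_single (⟨(l : ℕ) + 1, hl1⟩ : Fin M)]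
    · simp only [compMat, Matrix.of_apply, hankel, if_neg hl]
      have harg : k0 + (i : ℕ) + ((l : ℕ) + 1) = k0 + 1 + (i : ℕ) + (l : ℕ) := by omega
      simp [harg]
    · intro t _ hne
      simp only [compMat, Matrix.of_apply, hankel, if_neg hl]
      rw [if_neg (fun h => hne (Fin.ext h))]
      ring
    · intro hmem; exact absurd (Finset.mem_univ _) hmem

lemma pAnn_expand (M : ℕ) (hM : M = ∑ i, m i) :
    (X : ℂ[X]) ^ M + ∑ l : Fin M, C ((pAnn z m).coeff (l : ℕ)) * X ^ (l : ℕ)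
      = pAnn z m := by
  conv_rhs => rw [(pAnn z m).as_sum_range' (M + 1) (by rw [pAnn_natDegree]; omega)]
  rw [Finset.sum_range_succ]
  have hcoef : (pAnn z m).coeff M = 1 := by rw [hM]; exact pAnn_coeff_top z m
  rw [hcoef, ← X_pow_eq_monomial, add_comm]
  congr 1
  rw [← Fin.sum_univ_eq_sum_range (fun l => (monomial l) ((pAnn z m).coeff l)) M]
  exact Finset.sum_congr rfl fun l _ => C_mul_X_pow_eq_monomial


lemma compMat_map_C (M : ℕ) (a : Fin M → ℂ) :
    (compMat M a).map C = compMat M (fun l => C (a l)) := by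
  ext i l
  simp only [Matrix.map_apply, compMat, Matrix.of_apply, map_add, apply_ite C, map_neg,
    map_zero, C_1]

lemma det_map_C_eq {M : ℕ} (G : Matrix (Fin M) (Fin M) ℂ) :
    (G.map C).det = C G.det := by
  have h := RingHom.map_det (C : ℂ →+* ℂ[X]) G
  rw [RingHom.mapMatrix_apply] at h
  exact h.symm

lemma det_map_eval_eq {M : ℕ} (T : Matrix (Fin M) (Fin M) ℂ[X]) (w : ℂ) :
    (T.det).eval w = (T.map (eval w)).det := by
  have h := RingHom.map_det (evalRingHom w) T
  rw [RingHom.mapMatrix_apply] at h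
  simpa [coe_evalRingHom] using h

lemma pAnn_eval_expand (M : ℕ) (hM : M = ∑ i, m i) (w : ℂ) :
    (pAnn z m).eval w = w ^ M + ∑ l : Fin M, (pAnn z m).coeff (l : ℕ) * w ^ (l : ℕ) := by
  have h := congrArg (eval w) (pAnn_expand z m M hM)
  rw [eval_add, eval_pow, eval_X, eval_finset_sum] at h
  rw [← h]
  congr 1
  exact Finset.sum_congr rfl fun l _ => by rw [eval_mul, eval_C, eval_pow, eval_X]

lemma pencil_matrix_eq (M : ℕ) (hM : M = ∑ i, m i) (k0 N : ℕ) :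
    (Matrix.of fun i l : Fin M =>
        C (((hankel (hmes z m c) k0 N M)ᴴ * hankel (hmes z m c) (k0 + 1) N M) i l)
          - X * C (((hankel (hmes z m c) k0 N M)ᴴ * hankel (hmes z m c) k0 N M) i l))
      = ((hankel (hmes z m c) k0 N M)ᴴ * hankel (hmes z m c) k0 N M).map C
          * ((compMat M (fun l => (pAnn z m).coeff (l : ℕ))).map C
            - (X : ℂ[X]) • 1) := by
  set A := hankel (hmes z m c) k0 N M
  set Cm := compMat M (fun l => (pAnn z m).coeff (l : ℕ)) with hCm
  set G := Aᴴ * A with hG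
  have hB : hankel (hmes z m c) (k0 + 1) N M = A * Cm := hankel_succ_factor z m c M hM k0 N
  ext i l
  rw [Matrix.mul_apply]
  simp only [Matrix.map_apply, Matrix.sub_apply, Matrix.smul_apply, Matrix.one_apply,
    Matrix.of_apply, smul_eq_mul, mul_sub]
  rw [Finset.sum_sub_distrib]
  have h1 : ∑ t, C (G i t) * C (Cm t l) = C ((Aᴴ * (A * Cm)) i l) := by
    rw [← Matrix.mul_assoc, Matrix.mul_apply, map_sum]
    exact Finset.sum_congr rfl fun t _ => (map_mul C _ _).symm
  have h2 : ∑ t, C (G i t) * (X * if t = l then 1 else 0) = X * C (G i l) := by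
    rw [Finset.sum_eq_single l]
    · rw [if_pos rfl, mul_one]; ring
    · intro b _ hne; rw [if_neg hne]; ring
    · intro hmem; exact absurd (Finset.mem_univ _) hmem
  rw [h1, h2, hB]

include hz hz0 hm hc in
lemma pencil_poly_eq (M : ℕ) (hM : M = ∑ i, m i) (k0 N : ℕ) :
    pencilPoly (hankel (hmes z m c) k0 N M) (hankel (hmes z m c) (k0 + 1) N M)
      = C (((hankel (hmes z m c) k0 N M)ᴴ * hankel (hmes z m c) k0 N M).det)
          * ((-1) ^ M * pAnn z m) := by
  rw [pencilPoly, pencil_matrix_eq z m c M hM k0 N, Matrix.det_mul]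
  rw [det_map_C_eq, compMat_map_C, det_compMat_sub, pAnn_expand z m M hM]

end Main

end HankelAux

/-- if all leading coefficients `c j (m j - 1)` are nonzero, then
`w` is a generalized eigenvalue of the pencil, i.e.
`det((H_{N,M}^{k0})ᴴ (H_{N,M}^{k0+1} - w • H_{N,M}^{k0})) = 0`, iff
`w ∈ {z 1, …, z n}`; moreover each `z j` is a root of the corresponding
polynomial of multiplicity exactly `m j`. -/
theorem hankel_pencil_eigenvalues (n : ℕ) (hn : 1 ≤ n) (z : Fin n → ℂ)
    (hz : Function.Injective z) (hz0 : ∀ j, z j ≠ 0)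
    (m : Fin n → ℕ) (hm : ∀ j, 1 ≤ m j) (M : ℕ) (hM : M = ∑ j, m j)
    (c : (j : Fin n) → Fin (m j) → ℂ)
    (hc : ∀ j, c j ⟨m j - 1, Nat.sub_lt (hm j) one_pos⟩ ≠ 0)
    (k0 N : ℕ) (hN : M ≤ N) :
    (∀ w : ℂ,
      ((hankel (hmes z m c) k0 N M)ᴴ *
          (hankel (hmes z m c) (k0 + 1) N M -
            w • hankel (hmes z m c) k0 N M)).det = 0 ↔ ∃ j, w = z j) ∧
    (∀ w : ℂ,
      (pencilPoly (hankel (hmes z m c) k0 N M)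
          (hankel (hmes z m c) (k0 + 1) N M)).eval w =
        ((hankel (hmes z m c) k0 N M)ᴴ *
          (hankel (hmes z m c) (k0 + 1) N M -
            w • hankel (hmes z m c) k0 N M)).det) ∧
    (∀ j : Fin n,
      (pencilPoly (hankel (hmes z m c) k0 N M)
          (hankel (hmes z m c) (k0 + 1) N M)).rootMultiplicity (z j) = m j) := by
  classical
  open HankelAux in
  have hMpos : 0 < M := by
    rw [hM]
    exact Finset.sum_pos (fun i _ => hm i) ⟨⟨0, hn⟩, Finset.mem_univ _⟩
  set A := hankel (hmes z m c) k0 N M with hA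
  set B := hankel (hmes z m c) (k0 + 1) N M with hB
  set G := Aᴴ * A with hG
  set Cm := HankelAux.compMat M (fun l => (HankelAux.pAnn z m).coeff (l : ℕ)) with hCm
  have hdetG : G.det ≠ 0 := HankelAux.detG_ne z hz hz0 m hm c hc M hM hMpos k0 N hN
  have hfac : B = A * Cm := HankelAux.hankel_succ_factor z m c M hM k0 N
  -- main det identity
  have hdet : ∀ w : ℂ, (Aᴴ * (B - w • A)).det
      = G.det * ((-1) ^ M * (HankelAux.pAnn z m).eval w) := by
    intro w
    have h1 : B - w • A = A * (Cm - w • 1) := by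
      rw [hfac, Matrix.mul_sub, Matrix.mul_smul, Matrix.mul_one]
    rw [h1, ← Matrix.mul_assoc, Matrix.det_mul, ← hG, HankelAux.det_compMat_sub,
      HankelAux.pAnn_eval_expand z m M hM w]
  -- root characterization
  have hroot : ∀ w : ℂ, (HankelAux.pAnn z m).eval w = 0 ↔ ∃ j, w = z j := by
    intro w
    rw [HankelAux.pAnn, eval_prod]
    rw [Finset.prod_eq_zero_iff]
    constructor
    · rintro ⟨j, -, hj⟩
      simp only [eval_pow, eval_sub, eval_X, eval_C] at hj
      exact ⟨j, by
        have h4 := pow_eq_zero_iff (n := m j) (by have := hm j; omega) |>.mp hj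
        exact sub_eq_zero.mp h4⟩
    · rintro ⟨j, rfl⟩
      exact ⟨j, Finset.mem_univ j, by
        simp only [eval_pow, eval_sub, eval_X, eval_C, sub_self]
        exact zero_pow (by have := hm j; omega)⟩
  refine ⟨?_, ?_, ?_⟩
  · intro w
    rw [hdet w]
    constructor
    · intro h
      rcases mul_eq_zero.mp h with h1 | h1
      · exact absurd h1 hdetG
      · rcases mul_eq_zero.mp h1 with h2 | h2
        · exact absurd h2 (pow_ne_zero _ (by norm_num))
        · exact (hroot w).mp h2
    · rintro ⟨j, rfl⟩
      rw [(hroot (z j)).mpr ⟨j, rfl⟩]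
      ring
  · intro w
    rw [pencilPoly, HankelAux.det_map_eval_eq]
    congr 1
    ext i l
    simp only [Matrix.map_apply, Matrix.of_apply, eval_sub, eval_mul,
      eval_C, eval_X, Matrix.mul_sub, Matrix.sub_apply, Matrix.mul_smul, Matrix.smul_apply,
      smul_eq_mul]
  · intro j
    rw [HankelAux.pencil_poly_eq z hz hz0 m hm c hc M hM k0 N]
    have hCpow : ((-1 : ℂ[X]) ^ M) = C ((-1 : ℂ) ^ M) := by
      rw [map_pow, map_neg, C_1]
    rw [hCpow, show C G.det * (C ((-1:ℂ) ^ M) * HankelAux.pAnn z m)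
        = C (G.det * (-1:ℂ) ^ M) * HankelAux.pAnn z m from by rw [C_mul]; ring]
    have hd : G.det * (-1:ℂ) ^ M ≠ 0 :=
      mul_ne_zero hdetG (pow_ne_zero _ (by norm_num))
    rw [rootMultiplicity_mul (mul_ne_zero (fun h => hd (by
        simpa using congrArg (eval 0) h)) (HankelAux.pAnn_monic z m).ne_zero)]
    rw [rootMultiplicity_C, zero_add]
    -- rm of pAnn at z j
    have hsplit : HankelAux.pAnn z m
        = (∏ i ∈ Finset.univ.erase j, (X - C (z i)) ^ (m i)) * (X - C (z j)) ^ (m j) := by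
      rw [HankelAux.pAnn, mul_comm]
      exact (Finset.mul_prod_erase Finset.univ _ (Finset.mem_univ j)).symm
    have hQne : (∏ i ∈ Finset.univ.erase j, (X - C (z i)) ^ (m i)) ≠ 0 :=
      Finset.prod_ne_zero_iff.mpr fun i _ => pow_ne_zero _ (X_sub_C_ne_zero _)
    rw [hsplit, rootMultiplicity_mul_X_sub_C_pow hQne]
    have hrm0 : rootMultiplicity (z j) (∏ i ∈ Finset.univ.erase j, (X - C (z i)) ^ (m i)) = 0 := by
      refine rootMultiplicity_eq_zero ?_
      rw [IsRoot.def, eval_prod]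
      refine Finset.prod_ne_zero_iff.mpr fun i hi => ?_
      simp only [eval_pow, eval_sub, eval_X, eval_C]
      exact pow_ne_zero _ (sub_ne_zero_of_ne fun h => (Finset.mem_erase.mp hi).1 (hz h).symm)
    rw [hrm0, zero_add]
end

section
/- Let A and B be N × M complex matrices with N ≥ M, and suppose A = U · [Σ'; 0] · X and B = V · [Σ; 0] · X, where U and V are N × N unitary matrices, X is an invertible M × M matrix, Σ and Σ' are M × M diagonal matrices, [Σ; 0] denotes the N × M matrix obtained by stacking the M × M block on top of the (N − M) × M zero block, and Σ is invertible. Then for every z ∈ ℂ: B^* (A − z B) = X^* Σ^* (V_M^* U_M Σ' − z Σ) X, where U_M and V_M denote the N × M matrices formed by the first M columns of U and V; consequently det(B^* (A − z B)) = 0 if and only if z is an eigenvalue of the M × M matrix Σ^{−1} V_M^* U_M Σ'. -/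
open Matrix

/-- The `N × M` matrix obtained by stacking an `M × M` block `D` on top of an
`(N - M) × M` zero block. -/
def stackZero {M : ℕ} (N : ℕ) (D : Matrix (Fin M) (Fin M) ℂ) :
    Matrix (Fin N) (Fin M) ℂ :=
  Matrix.of fun i l => if hi : (i : ℕ) < M then D ⟨(i : ℕ), hi⟩ l else 0

/-- The `N × M` matrix formed by the first `M` columns of an `N × N` matrix. -/
def firstCols {N : ℕ} (M : ℕ) (hNM : M ≤ N) (W : Matrix (Fin N) (Fin N) ℂ) :
    Matrix (Fin N) (Fin M) ℂ :=
  W.submatrix id (Fin.castLE hNM)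

lemma mul_stackZero {N M : ℕ} (hNM : M ≤ N) (W : Matrix (Fin N) (Fin N) ℂ)
    (D : Matrix (Fin M) (Fin M) ℂ) :
    W * stackZero N D = firstCols M hNM W * D := by
  ext i l
  simp only [Matrix.mul_apply, stackZero, firstCols, Matrix.of_apply,
    Matrix.submatrix_apply, id]
  set F : ℕ → ℂ := fun j =>
    if h : j < M then W i ⟨j, Nat.lt_of_lt_of_le h hNM⟩ * D ⟨j, h⟩ l else 0 with hFdef
  have h1 : (∑ x : Fin N, W i x * if h : (x : ℕ) < M then D ⟨x, h⟩ l else 0)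
      = ∑ j ∈ Finset.range N, F j := by
    rw [← Fin.sum_univ_eq_sum_range]
    refine Finset.sum_congr rfl fun x _ => ?_
    by_cases h : (x : ℕ) < M <;> simp [hFdef, h]
  have h2 : (∑ k : Fin M, W i (Fin.castLE hNM k) * D k l)
      = ∑ j ∈ Finset.range M, F j := by
    rw [← Fin.sum_univ_eq_sum_range]
    refine Finset.sum_congr rfl fun k _ => ?_
    simp [hFdef, k.isLt, Fin.castLE]
  rw [h1, h2]
  rw [Finset.sum_subset (Finset.range_subset_range.mpr hNM)]
  intro x _ hx
  simp only [Finset.mem_range, not_lt] at hx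
  simp [hFdef, Nat.not_lt.mpr hx]

lemma firstCols_unitary {N M : ℕ} (hNM : M ≤ N) (V : Matrix (Fin N) (Fin N) ℂ)
    (hV : Vᴴ * V = 1) :
    (firstCols M hNM V)ᴴ * firstCols M hNM V = 1 := by
  ext k l
  have := congrFun (congrFun hV (Fin.castLE hNM k)) (Fin.castLE hNM l)
  simp only [Matrix.mul_apply, Matrix.conjTranspose_apply, firstCols,
    Matrix.submatrix_apply, id, Matrix.one_apply] at this ⊢
  rw [this]
  simp [Fin.castLE_inj]

/-- if `A = U * [Σ'; 0] * X` and `B = V * [Σ; 0] * X` with `U, V`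
unitary, `X` invertible, `Σ, Σ'` diagonal and `Σ` invertible, then
`Bᴴ (A - z B) = Xᴴ Σᴴ (V_Mᴴ U_M Σ' - z Σ) X`; consequently
`det(Bᴴ (A - z B)) = 0` iff `z` is an eigenvalue of `Σ⁻¹ V_Mᴴ U_M Σ'`. -/
theorem gsvd_pencil (N M : ℕ) (hNM : M ≤ N)
    (A B : Matrix (Fin N) (Fin M) ℂ)
    (U V : Matrix (Fin N) (Fin N) ℂ) (hU : Uᴴ * U = 1) (hV : Vᴴ * V = 1)
    (Xm : Matrix (Fin M) (Fin M) ℂ) (hX : IsUnit Xm)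
    (S S' : Matrix (Fin M) (Fin M) ℂ) (hS : S.IsDiag) (hS' : S'.IsDiag)
    (hSu : IsUnit S)
    (hA : A = U * stackZero N S' * Xm) (hB : B = V * stackZero N S * Xm) :
    ∀ z : ℂ,
      Bᴴ * (A - z • B) =
        Xmᴴ * Sᴴ *
          ((firstCols M hNM V)ᴴ * firstCols M hNM U * S' - z • S) * Xm ∧
      ((Bᴴ * (A - z • B)).det = 0 ↔
        (S⁻¹ * (firstCols M hNM V)ᴴ * firstCols M hNM U * S' -
            z • (1 : Matrix (Fin M) (Fin M) ℂ)).det = 0) := by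
  intro z
  set Vm := firstCols M hNM V with hVmdef
  set Um := firstCols M hNM U with hUmdef
  have hBe : B = Vm * S * Xm := by rw [hB, mul_stackZero hNM]
  have hAe : A = Um * S' * Xm := by rw [hA, mul_stackZero hNM]
  have hVm : Vmᴴ * Vm = 1 := firstCols_unitary hNM V hV
  have hdX : Xm.det ≠ 0 := by
    intro h
    exact (by simpa [h] using (Matrix.isUnit_iff_isUnit_det Xm).mp hX : IsUnit (0:ℂ)).ne_zero rfl
  have hdS : S.det ≠ 0 := by
    intro h
    exact (by simpa [h] using (Matrix.isUnit_iff_isUnit_det S).mp hSu : IsUnit (0:ℂ)).ne_zero rfl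
  have key : Bᴴ * (A - z • B) = Xmᴴ * Sᴴ * (Vmᴴ * Um * S' - z • S) * Xm := by
    rw [hAe, hBe]
    simp only [Matrix.conjTranspose_mul, Matrix.mul_sub, Matrix.sub_mul,
      Matrix.mul_smul, Matrix.smul_mul, Matrix.mul_assoc]
    rw [show Vmᴴ * (Vm * (S * Xm)) = S * Xm from by
      rw [← Matrix.mul_assoc, hVm, Matrix.one_mul]]
  refine ⟨key, ?_⟩
  rw [key]
  have hP : S⁻¹ * Vmᴴ * Um * S' - z • (1 : Matrix (Fin M) (Fin M) ℂ)
      = S⁻¹ * (Vmᴴ * Um * S' - z • S) := by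
    rw [Matrix.mul_sub, Matrix.mul_smul, Matrix.nonsing_inv_mul S (isUnit_iff_ne_zero.mpr hdS)]
    simp [Matrix.mul_assoc]
  rw [hP]
  simp [Matrix.det_mul, Matrix.det_conjTranspose, Matrix.det_nonsing_inv,
    Ring.inverse_eq_inv', mul_eq_zero, inv_eq_zero, star_eq_zero, hdX, hdS]
end
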